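/- Let N be a positive integer and let p, q be coprime integers with q ≥ 1. Then there exist a matrix γ ∈ Γ₀(N), an integer w with 1 ≤ w ≤ N, and an integer p′ with p′ ≡ p (mod gcd(q, N)) and gcd(p′, N) = 1, such that γ·(p, q)ᵀ = (1, w)ᵀ and w ≡ p′·q (mod N). -/

import Mathlib

open Matrix

private lemma aux_coprime_shift (x y N : ℤ) (hN : 0 < N) (h : IsCoprime x y) :
    ∃ k : ℤ, IsCoprime (x + y * k) N := by
  refine ⟨(∏ ℓ ∈ N.natAbs.primeFactors.filter (fun ℓ : ℕ => ¬ (ℓ : ℤ) ∣ x), (ℓ : ℤ)), ?_⟩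
  set t : ℤ := ∏ ℓ ∈ N.natAbs.primeFactors.filter (fun ℓ : ℕ => ¬ (ℓ : ℤ) ∣ x), (ℓ : ℤ) with ht
  rw [Int.isCoprime_iff_gcd_eq_one]
  by_contra hg
  obtain ⟨ℓ, hℓp, hℓd⟩ := Nat.exists_prime_and_dvd hg
  have hℓz : (ℓ : ℤ) ∣ x + y * t :=
    dvd_trans (Int.natCast_dvd_natCast.mpr hℓd) (Int.gcd_dvd_left _ _)
  have hℓN : (ℓ : ℤ) ∣ N :=
    dvd_trans (Int.natCast_dvd_natCast.mpr hℓd) (Int.gcd_dvd_right _ _)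
  have hℓpz : Prime (ℓ : ℤ) := Nat.prime_iff_prime_int.mp hℓp
  by_cases hx : (ℓ : ℤ) ∣ x
  · have hyt : (ℓ : ℤ) ∣ y * t := by
      have := dvd_sub hℓz hx
      simpa using this
    rcases hℓpz.dvd_mul.mp hyt with hy | htd
    · exact hℓpz.not_unit (h.isUnit_of_dvd' hx hy)
    · obtain ⟨ℓ', hℓ'mem, hdvd⟩ := hℓpz.exists_mem_finset_dvd htd
      rw [Finset.mem_filter] at hℓ'mem
      have : ℓ = ℓ' := by
        have := Int.natCast_dvd_natCast.mp hdvd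
        exact ((Nat.prime_dvd_prime_iff_eq hℓp
          (Nat.prime_of_mem_primeFactors hℓ'mem.1)).mp this)
      exact hℓ'mem.2 (this ▸ hx)
  · have hmem : ℓ ∈ N.natAbs.primeFactors.filter (fun ℓ : ℕ => ¬ (ℓ : ℤ) ∣ x) := by
      rw [Finset.mem_filter, Nat.mem_primeFactors]
      refine ⟨⟨hℓp, ?_, ?_⟩, hx⟩
      · exact Int.natCast_dvd.mp hℓN
      · simp [Int.natAbs_eq_zero]; omega
    have hℓt : (ℓ : ℤ) ∣ t := Finset.dvd_prod_of_mem _ hmem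
    have : (ℓ : ℤ) ∣ x := by
      have := dvd_sub hℓz (hℓt.mul_left y)
      simpa using this
    exact hx this

/-- **Every cusp is equivalent to one of the form `1/w`** (part of Proposition 3.2 of the
paper): given a cusp `p/q` in lowest terms, there are `γ ∈ Γ₀(N)` and `1 ≤ w ≤ N` with
`γ·(p,q)ᵀ = (1,w)ᵀ`, and moreover `w ≡ p′q (mod N)` for some `p′ ≡ p (mod (q,N))` with
`(p′,N) = 1`. -/
theorem stmt_6 (N : ℤ) (hN : 0 < N) (p q : ℤ) (hpq : IsCoprime p q) (hq : 1 ≤ q) :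
    ∃ γ : Matrix (Fin 2) (Fin 2) ℤ, ∃ w p' : ℤ,
      γ.det = 1 ∧ N ∣ γ 1 0 ∧
      1 ≤ w ∧ w ≤ N ∧
      p' ≡ p [ZMOD Int.gcd q N] ∧ IsCoprime p' N ∧
      γ 0 0 * p + γ 0 1 * q = 1 ∧ γ 1 0 * p + γ 1 1 * q = w ∧
      w ≡ p' * q [ZMOD N] := by
  obtain ⟨k, hk⟩ := aux_coprime_shift p q N hN hpq
  set p' : ℤ := p + q * k with hp'def
  have hp'q : IsCoprime p' q := hpq.add_mul_left_left k
  have hc : IsCoprime p' (q * N) := hp'q.mul_right hk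
  obtain ⟨a, s, has⟩ := hc
  set b : ℤ := s * N + a * k with hbdef
  set w : ℤ := (p' * q - 1) % N + 1 with hwdef
  have h1 : a * p + b * q = 1 := by
    rw [hbdef]; rw [hp'def] at has; linear_combination has
  have hw_mod : N ∣ p' * q - w := by
    refine ⟨(p' * q - 1) / N, ?_⟩
    rw [hwdef, Int.emod_def]; ring
  have hw1 : 1 ≤ w := by
    have := Int.emod_nonneg (p' * q - 1) (ne_of_gt hN)
    omega
  have hw2 : w ≤ N := by
    have := Int.emod_lt_of_pos (p' * q - 1) hN
    omega
  have hap' : N ∣ a * p' - 1 := ⟨-(s * q), by linear_combination has⟩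
  obtain ⟨u, hu⟩ := hw_mod
  obtain ⟨v, hv⟩ := hap'
  have hc10 : N ∣ a * w - q := ⟨q * v - a * u, by linear_combination (-a) * hu + q * hv⟩
  refine ⟨!![a, b; a * w - q, p + b * w], w, p', ?_, ?_, hw1, hw2, ?_, hk, ?_, ?_, ?_⟩
  · rw [Matrix.det_fin_two_of]; linear_combination h1
  · simpa using hc10
  · rw [Int.modEq_iff_dvd, hp'def]
    obtain ⟨d, hd⟩ : ((Int.gcd q N : ℤ)) ∣ q := Int.gcd_dvd_left _ _
    exact ⟨-(d * k), by linear_combination (-k) * hd⟩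
  · simpa using h1
  · simp only [Matrix.cons_val', Matrix.cons_val_zero, Matrix.cons_val_one, Matrix.head_cons,
      Matrix.empty_val', Matrix.cons_val_fin_one, Matrix.head_fin_const, Matrix.of_apply]
    linear_combination w * h1
  · rw [Int.modEq_iff_dvd]
    exact ⟨u, by linear_combination hu⟩
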